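/- In every sequential execution from q consisting of all k competing invocations o_1, …, o_k, each exactly once and in an arbitrary order, exactly one invocation returns true; namely, the successful invocation is the earliest invocation o_j in the order such that either j = 1 or A_j ≤ B, and every other invocation returns false. -/

import Mathlib

/-- A token state: balances and allowances. -/
structure TokenState (A P : Type*) where
  bal : A → ℕ
  alw : A × P → ℕ

variable {A P : Type*} [DecidableEq A] [DecidableEq P] [Fintype A] [Fintype P]

/-- The set of enabled spenders of account `a` in state `q`. -/
def spenders (ω : A ≃ P) (q : TokenState A P) (a : A) : Finset P :=
  if q.bal a = 0 then {ω a}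
  else Finset.univ.filter fun p => p = ω a ∨ 0 < q.alw (a, p)

/-- The maximum, over all accounts, of the number of enabled spenders. -/
def maxSpenders (ω : A ≃ P) (q : TokenState A P) : ℕ :=
  Finset.univ.sup fun a => (spenders ω q a).card

/-- `Qset ω k` is the set of token states whose maximal number of enabled
spenders for a single account equals `k`. -/
def Qset (ω : A ≃ P) (k : ℕ) : Set (TokenState A P) :=
  {q | maxSpenders ω q = k}

/-- `transfer(a_d, v)` invoked by process `p`. Returns the new state and the response. -/
def transferOp (ω : A ≃ P) (p : P) (ad : A) (v : ℕ) (q : TokenState A P) :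
    TokenState A P × Bool :=
  if v ≤ q.bal (ω.symm p) then
    (⟨Function.update (Function.update q.bal (ω.symm p) (q.bal (ω.symm p) - v)) ad
        (Function.update q.bal (ω.symm p) (q.bal (ω.symm p) - v) ad + v), q.alw⟩, true)
  else (q, false)

/-- `transferFrom(a_s, a_d, v)` invoked by process `p`. -/
def transferFromOp (p : P) (asrc ad : A) (v : ℕ) (q : TokenState A P) :
    TokenState A P × Bool :=
  if v ≤ q.bal asrc ∧ v ≤ q.alw (asrc, p) then
    (⟨Function.update (Function.update q.bal asrc (q.bal asrc - v)) ad
        (Function.update q.bal asrc (q.bal asrc - v) ad + v),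
      Function.update q.alw (asrc, p) (q.alw (asrc, p) - v)⟩, true)
  else (q, false)

/-- `approve(p̄, v)` invoked by process `p`: always succeeds and sets `α(a_p, p̄) := v`. -/
def approveOp (ω : A ≃ P) (p pbar : P) (v : ℕ) (q : TokenState A P) :
    TokenState A P × Bool :=
  (⟨q.bal, Function.update q.alw (ω.symm p, pbar) v⟩, true)

/-- Sequential execution of a list of invocations: the final state. -/
def execRun {ι : Type*} (ops : ι → TokenState A P → TokenState A P × Bool) :
    List ι → TokenState A P → TokenState A P
  | [], q => q
  | i :: r, q => execRun ops r (ops i q).1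

/-- Sequential execution of a list of invocations, recording each invocation
together with its response. -/
def runRes {ι : Type*} (ops : ι → TokenState A P → TokenState A P × Bool) :
    List ι → TokenState A P → List (ι × Bool)
  | [], _ => []
  | i :: r, q => (i, (ops i q).2) :: runRes ops r (ops i q).1

/-- The competing invocations: `o_0` is `transfer(a_d, B)` by the owner `p 0`,
and for `i ≠ 0`, `o_i` is `transferFrom(a_1, a_d, A_i)` by `p i`, where `B` and
`A_i` are the balance and allowances in the fixed starting state `q`. -/
def compOps (ω : A ≃ P) (q : TokenState A P) (a1 ad : A) {k : ℕ} [NeZero k]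
    (p : Fin k → P) (i : Fin k) : TokenState A P → TokenState A P × Bool :=
  if i = 0 then transferOp ω (p 0) ad (q.bal a1)
  else transferFromOp (p i) a1 ad (q.alw (a1, p i))

theorem my_runRes_append {ι : Type*} (ops : ι → TokenState A P → TokenState A P × Bool)
    (l1 l2 : List ι) (q : TokenState A P) :
    runRes ops (l1 ++ l2) q = runRes ops l1 q ++ runRes ops l2 (execRun ops l1 q) := by
  induction l1 generalizing q with
  | nil => simp [runRes, execRun]
  | cons a t ih => simp [runRes, execRun, ih]

theorem my_runRes_all_fail {ι : Type*} (ops : ι → TokenState A P → TokenState A P × Bool)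
    (l : List ι) (q : TokenState A P) (h : ∀ i ∈ l, ops i q = (q, false)) :
    runRes ops l q = l.map (fun i => (i, false)) ∧ execRun ops l q = q := by
  induction l with
  | nil => simp [runRes, execRun]
  | cons a t ih =>
    have ha := h a List.mem_cons_self
    have ht := ih (fun i hi => h i (List.mem_cons_of_mem _ hi))
    simp [runRes, execRun, ha, ht.1, ht.2]

theorem my_exists_split {α : Type*} (Pr : α → Bool) :
    ∀ l : List α, (∃ a ∈ l, Pr a = true) →
      ∃ l1 j l2, l = l1 ++ j :: l2 ∧ Pr j = true ∧ ∀ i ∈ l1, Pr i = false := by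
  intro l
  induction l with
  | nil => rintro ⟨a, ha, -⟩; simp at ha
  | cons a t ih =>
    intro hex
    by_cases hPa : Pr a = true
    · exact ⟨[], a, t, rfl, hPa, by simp⟩
    · obtain ⟨b, hb, hPb⟩ := hex
      rcases List.mem_cons.mp hb with rfl | hb
      · exact absurd hPb hPa
      · obtain ⟨l1, j, l2, h1, h2, h3⟩ := ih ⟨b, hb, hPb⟩
        refine ⟨a :: l1, j, l2, by simp [h1], h2, ?_⟩
        intro i hi
        rcases List.mem_cons.mp hi with rfl | hi
        · simpa using hPa
        · exact h3 i hi

theorem my_find?_split {α : Type*} (Pr : α → Bool) (l1 : List α) (j : α) (l2 : List α)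
    (h1 : ∀ i ∈ l1, Pr i = false) (h2 : Pr j = true) :
    List.find? Pr (l1 ++ j :: l2) = some j := by
  induction l1 with
  | nil => simp [List.find?, h2]
  | cons a t ih =>
    have := h1 a List.mem_cons_self
    simp only [List.cons_append, List.find?, this]
    exact ih (fun i hi => h1 i (List.mem_cons_of_mem _ hi))

/-- in every sequential execution from `q` of all `k` competing
invocations, each exactly once and in an arbitrary order, exactly one
invocation returns `true`, namely the earliest invocation `o_j` in the order
such that either `j` is the owner's index or `A_j ≤ B`; every other invocation
returns `false`. -/
theorem stmt5 (n : ℕ) (hn : 1 ≤ n)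
    (hcA : Fintype.card A = n) (hcP : Fintype.card P = n) (ω : A ≃ P)
    (q : TokenState A P) (a1 ad : A) (had : ad ≠ a1)
    (k : ℕ) [NeZero k] (hkn : k ≤ n)
    (p : Fin k → P) (hinj : Function.Injective p) (hp1 : p 0 = ω a1)
    (hB : 0 < q.bal a1)
    (hAi : ∀ i : Fin k, i ≠ 0 → 0 < q.alw (a1, p i))
    (hut : k ≤ 2 ∨ ∀ i j : Fin k, i ≠ 0 → j ≠ 0 → i ≠ j →
      q.bal a1 < q.alw (a1, p i) + q.alw (a1, p j)) :
    ∀ l : List (Fin k), l.Nodup → (∀ i : Fin k, i ∈ l) →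
      (runRes (compOps ω q a1 ad p) l q).countP (fun x => x.2) = 1 ∧
      ∀ x ∈ runRes (compOps ω q a1 ad p) l q,
        (x.2 = true ↔
          l.find? (fun j => decide (j = 0 ∨ q.alw (a1, p j) ≤ q.bal a1))
            = some x.1) := by
  intro l hnd hall
  set Pr : Fin k → Bool := fun j => decide (j = 0 ∨ q.alw (a1, p j) ≤ q.bal a1) with hPrdef
  obtain ⟨l1, j, l2, hsplit, hPj, hl1⟩ :=
    my_exists_split Pr l ⟨0, hall 0, by simp [hPrdef]⟩
  have hsymm : ω.symm (p 0) = a1 := by rw [hp1]; simp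
  -- j not in l1, l2
  rw [hsplit] at hnd
  have hnd' := hnd
  rw [List.nodup_append] at hnd'
  have hjl1 : j ∉ l1 := fun hj => hnd'.2.2 j hj j List.mem_cons_self rfl
  have hjl2 : j ∉ l2 := by
    have := hnd'.2.1
    exact (List.nodup_cons.mp this).1
  have hl2l1 : ∀ i ∈ l2, i ∉ l1 := fun i hi hi1 =>
    hnd'.2.2 i hi1 i (List.mem_cons_of_mem _ hi) rfl
  -- prefix fails
  have hfail1 : ∀ i ∈ l1, compOps ω q a1 ad p i q = (q, false) := by
    intro i hi
    have h := hl1 i hi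
    simp only [hPrdef, decide_eq_false_iff_not, not_or, not_le] at h
    obtain ⟨hi0, hAgt⟩ := h
    simp only [compOps, if_neg hi0, transferFromOp]
    rw [if_neg (by omega)]
  obtain ⟨hrun1, hexec1⟩ := my_runRes_all_fail _ l1 q hfail1
  -- j succeeds
  have hPj' : j = 0 ∨ q.alw (a1, p j) ≤ q.bal a1 := by
    simpa [hPrdef] using hPj
  set q1 := (compOps ω q a1 ad p j q).1 with hq1
  have hsucc : (compOps ω q a1 ad p j q).2 = true := by
    rcases hPj' with rfl | hAle
    · simp [compOps, transferOp, hsymm]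
    · by_cases hj0 : j = 0
      · subst hj0; simp [compOps, transferOp, hsymm]
      · simp [compOps, if_neg hj0, transferFromOp, hAle]
  -- properties of q1
  have hbal1 : q1.bal a1 = if j = 0 then 0 else q.bal a1 - q.alw (a1, p j) := by
    by_cases hj0 : j = 0
    · subst hj0
      simp [hq1, compOps, transferOp, hsymm, Function.update_apply, had.symm]
    · have hAle : q.alw (a1, p j) ≤ q.bal a1 := hPj'.resolve_left hj0
      simp [hq1, compOps, if_neg hj0, transferFromOp, hAle,
        Function.update_apply, had.symm]
  have halw1 : ∀ i : Fin k, i ≠ j → q1.alw (a1, p i) = q.alw (a1, p i) := by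
    intro i hij
    by_cases hj0 : j = 0
    · subst hj0
      simp [hq1, compOps, transferOp, hsymm]
    · have hAle : q.alw (a1, p j) ≤ q.bal a1 := hPj'.resolve_left hj0
      have hpij : p i ≠ p j := fun h => hij (hinj h)
      simp [hq1, compOps, if_neg hj0, transferFromOp, hAle,
        Function.update_apply, hpij]
  -- everything in l2 fails at q1
  have hfail2 : ∀ i ∈ l2, compOps ω q a1 ad p i q1 = (q1, false) := by
    intro i hi
    have hij : i ≠ j := fun h => hjl2 (h ▸ hi)
    by_cases hi0 : i = 0
    · subst hi0
      have hj0 : j ≠ 0 := fun h => hij h.symm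
      have hAj : 0 < q.alw (a1, p j) := hAi j hj0
      have hAle : q.alw (a1, p j) ≤ q.bal a1 := hPj'.resolve_left hj0
      have hb : q1.bal a1 = q.bal a1 - q.alw (a1, p j) := by
        rw [hbal1, if_neg hj0]
      have hcond : ¬ (q.bal a1 ≤ q1.bal (ω.symm (p 0))) := by
        rw [hsymm, hb]; omega
      have hc : compOps ω q a1 ad p 0 q1 = transferOp ω (p 0) ad (q.bal a1) q1 := by
        simp [compOps]
      rw [hc]
      simp only [transferOp, if_neg hcond]
    · have hAgt : ¬ (q.alw (a1, p i) ≤ q1.bal a1) := by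
        by_cases hj0 : j = 0
        · rw [hbal1, if_pos hj0]
          have := hAi i hi0
          omega
        · rw [hbal1, if_neg hj0]
          have hAle : q.alw (a1, p j) ≤ q.bal a1 := hPj'.resolve_left hj0
          rcases hut with hk2 | hut
          · exfalso
            have h1 : (i : ℕ) ≠ 0 := fun h => hi0 (Fin.ext (by rw [h]; simp))
            have h2 : (j : ℕ) ≠ 0 := fun h => hj0 (Fin.ext (by rw [h]; simp))
            have h3 : (i : ℕ) ≠ (j : ℕ) := by simpa [Fin.ext_iff] using hij
            have h4 : (i : ℕ) < k := i.isLt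
            have h5 : (j : ℕ) < k := j.isLt
            omega
          · have := hut i j hi0 hj0 hij
            omega
      simp only [compOps, if_neg hi0, transferFromOp]
      rw [if_neg (by exact fun h => hAgt h.1)]
  obtain ⟨hrun2, _⟩ := my_runRes_all_fail _ l2 q1 hfail2
  -- assemble
  have hfind : l.find? Pr = some j := by
    rw [hsplit]; exact my_find?_split Pr l1 j l2 hl1 hPj
  have hrunl : runRes (compOps ω q a1 ad p) l q =
      l1.map (fun i => (i, false)) ++ (j, true) :: l2.map (fun i => (i, false)) := by
    rw [hsplit, my_runRes_append, hexec1, hrun1]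
    simp only [runRes, hsucc, ← hq1, hrun2]
  rw [hrunl, ← hPrdef] at *
  constructor
  · have h0 : ∀ m : List (Fin k),
        List.countP (fun x => x.2) (m.map fun i => (i, false)) = 0 := fun m =>
      List.countP_eq_zero.mpr (by
        rintro ⟨a, b⟩ h
        rcases List.mem_map.mp h with ⟨i, -, hi⟩
        cases hi; simp)
    rw [List.countP_append, List.countP_cons, h0, h0]
    simp
  · intro x hx
    rw [hfind]
    rcases List.mem_append.mp hx with hx | hx
    · obtain ⟨i, hi, rfl⟩ := List.mem_map.mp hx
      simp only []
      constructor
      · intro h; exact absurd h (by simp)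
      · intro h
        exact absurd (Option.some_injective _ h) (fun hji => hjl1 (hji ▸ hi))
    · rcases List.mem_cons.mp hx with rfl | hx
      · simp
      · obtain ⟨i, hi, rfl⟩ := List.mem_map.mp hx
        constructor
        · intro h; exact absurd h (by simp)
        · intro h
          exact absurd (Option.some_injective _ h) (fun hji => hjl2 (hji ▸ hi))
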